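/- The ε-visibility γ_{V,M}(ε) := (1/ε)·sup_{Ω ∈ 𝐌} min_{ρ: range(ρ)⊆V, σ: tr(σΠ_V)≤1−ε} tr(Ω(ρ − σ)) is a monotonically non-decreasing function of ε on (0,1]. -/

import Mathlib

open Matrix
open scoped ComplexOrder

namespace QSVQDH

variable {d : ℕ}

/-- Schatten 1-norm (trace norm). -/
noncomputable def trNorm (A : Matrix (Fin d) (Fin d) ℂ) : ℝ :=
  (open scoped MatrixOrder in CFC.sqrt (Aᴴ * A)).trace.re

/-- Schatten 2-norm (Hilbert–Schmidt norm). -/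
noncomputable def hsNorm (A : Matrix (Fin d) (Fin d) ℂ) : ℝ :=
  Real.sqrt ((Aᴴ * A).trace.re)

/-- Operator norm. -/
noncomputable def opNorm (A : Matrix (Fin d) (Fin d) ℂ) : ℝ :=
  ‖Matrix.toEuclideanCLM (𝕜 := ℂ) A‖

/-- Density operator: positive semidefinite with unit trace. -/
def IsDensity (ρ : Matrix (Fin d) (Fin d) ℂ) : Prop := ρ.PosSemidef ∧ ρ.trace = 1

/-- POVM element: 0 ≤ M ≤ I. -/
def IsPOVMElem (M : Matrix (Fin d) (Fin d) ℂ) : Prop := M.PosSemidef ∧ (1 - M).PosSemidef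

/-- A measurement class of binary effects: contains 0, consists of POVM elements,
is convex, and is closed under M ↦ I − M. -/
def IsMClass (Mset : Set (Matrix (Fin d) (Fin d) ℂ)) : Prop :=
  0 ∈ Mset ∧ (∀ M ∈ Mset, IsPOVMElem M) ∧ Convex ℝ Mset ∧ (∀ M ∈ Mset, 1 - M ∈ Mset)

/-- The M-seminorm ‖Δ‖_M = sup_{M ∈ Mset} (2 tr(MΔ) − tr Δ). -/
noncomputable def Mnorm (Mset : Set (Matrix (Fin d) (Fin d) ℂ))
    (Δ : Matrix (Fin d) (Fin d) ℂ) : ℝ :=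
  sSup ((fun M => 2 * (M * Δ).trace.re - Δ.trace.re) '' Mset)

/-- The ε-distinguishability ratio μ_{ρ,M}(ε). -/
noncomputable def mu (Mset : Set (Matrix (Fin d) (Fin d) ℂ))
    (ρ : Matrix (Fin d) (Fin d) ℂ) (ε : ℝ) : ℝ :=
  (1 / (2 * ε)) *
    sInf ((fun σ => Mnorm Mset (ρ - σ)) '' {σ | IsDensity σ ∧ 2 * ε ≤ trNorm (ρ - σ)})

/-- The ε-visibility γ_{V,M}(ε), where the subspace V is given by its
orthogonal projector P. -/
noncomputable def gamma (Mset : Set (Matrix (Fin d) (Fin d) ℂ))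
    (P : Matrix (Fin d) (Fin d) ℂ) (ε : ℝ) : ℝ :=
  (1 / ε) * sSup ((fun Ω =>
      sInf ((fun p : Matrix (Fin d) (Fin d) ℂ × Matrix (Fin d) (Fin d) ℂ =>
          (Ω * (p.1 - p.2)).trace.re) ''
        {p | IsDensity p.1 ∧ P * p.1 = p.1 ∧ IsDensity p.2 ∧ (p.2 * P).trace.re ≤ 1 - ε}))
    '' Mset)

/-- The ε-visibility in its minimax (minimum) form. -/
noncomputable def gammaMin (Mset : Set (Matrix (Fin d) (Fin d) ℂ))
    (P : Matrix (Fin d) (Fin d) ℂ) (ε : ℝ) : ℝ :=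
  sInf ((fun p : Matrix (Fin d) (Fin d) ℂ × Matrix (Fin d) (Fin d) ℂ =>
      (1 / (2 * ε)) * Mnorm Mset (p.1 - p.2)) ''
    {p | IsDensity p.1 ∧ P * p.1 = p.1 ∧ IsDensity p.2 ∧ (p.2 * P).trace.re ≤ 1 - ε})

/-- μ_{ρ,M}(1), defined through perfectly distinguishable (orthogonal) counterparts. -/
noncomputable def muone (Mset : Set (Matrix (Fin d) (Fin d) ℂ))
    (ρ : Matrix (Fin d) (Fin d) ℂ) : ℝ :=
  (1 / 2) * sInf ((fun σ => Mnorm Mset (ρ - σ)) '' {σ | IsDensity σ ∧ (ρ * σ).trace = 0})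

/-- The distinguishability ratio μ̂_{ρ,M}. -/
noncomputable def muhat (Mset : Set (Matrix (Fin d) (Fin d) ℂ))
    (ρ : Matrix (Fin d) (Fin d) ℂ) : ℝ :=
  sInf ((fun σ => Mnorm Mset (ρ - σ) / trNorm (ρ - σ)) '' {σ | IsDensity σ ∧ σ ≠ ρ})

lemma aux_trace_cTc (E : Matrix (Fin d) (Fin d) ℂ) : 0 ≤ (Eᴴ * E).trace.re := by
  have h : (Eᴴ * E).trace = ((∑ j, ∑ i, Complex.normSq (E i j) : ℝ) : ℂ) := by
    simp only [Matrix.trace, Matrix.diag, Matrix.mul_apply, Matrix.conjTranspose_apply]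
    push_cast
    congr 1; ext j; congr 1; ext i
    rw [Complex.normSq_eq_conj_mul_self]; rfl
  rw [h, Complex.ofReal_re]
  exact Finset.sum_nonneg fun j _ => Finset.sum_nonneg fun i _ => Complex.normSq_nonneg _

lemma aux_trace_mul_nonneg {A B : Matrix (Fin d) (Fin d) ℂ} (hA : A.PosSemidef)
    (hB : B.PosSemidef) : 0 ≤ (A * B).trace.re := by
  obtain ⟨C, rfl⟩ : ∃ C : Matrix (Fin d) (Fin d) ℂ, A = Cᴴ * C := by
    open scoped MatrixOrder in exact CStarAlgebra.nonneg_iff_eq_star_mul_self.mp hA.nonneg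
  obtain ⟨D, rfl⟩ : ∃ D : Matrix (Fin d) (Fin d) ℂ, B = Dᴴ * D := by
    open scoped MatrixOrder in exact CStarAlgebra.nonneg_iff_eq_star_mul_self.mp hB.nonneg
  have h : (Cᴴ * C * (Dᴴ * D)).trace = ((D * Cᴴ)ᴴ * (D * Cᴴ)).trace := by
    rw [show Cᴴ * C * (Dᴴ * D) = Cᴴ * (C * (Dᴴ * D)) by noncomm_ring]
    rw [Matrix.trace_mul_comm, Matrix.conjTranspose_mul, Matrix.conjTranspose_conjTranspose]
    noncomm_ring
  rw [h]; exact aux_trace_cTc _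

lemma aux_smulPSD {A : Matrix (Fin d) (Fin d) ℂ} (hA : A.PosSemidef) {c : ℝ} (hc : 0 ≤ c) :
    ((c : ℂ) • A).PosSemidef := by
  constructor
  · unfold Matrix.IsHermitian
    rw [Matrix.conjTranspose_smul, hA.1.eq]
    congr 1; simp
  · exact (hA.smul (show (0:ℂ) ≤ (c:ℂ) by exact_mod_cast hc)).2

lemma aux_tr01 {A B : Matrix (Fin d) (Fin d) ℂ} (hA : IsPOVMElem A) (hB : IsDensity B) :
    0 ≤ (A * B).trace.re ∧ (A * B).trace.re ≤ 1 := by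
  refine ⟨aux_trace_mul_nonneg hA.1 hB.1, ?_⟩
  have h := aux_trace_mul_nonneg hA.2 hB.1
  rw [Matrix.sub_mul, Matrix.one_mul, Matrix.trace_sub, Complex.sub_re, hB.2,
    Complex.one_re] at h
  linarith

lemma aux_gbound {A B C : Matrix (Fin d) (Fin d) ℂ} (hA : IsPOVMElem A) (hB : IsDensity B)
    (hC : IsDensity C) : -1 ≤ (A * (B - C)).trace.re ∧ (A * (B - C)).trace.re ≤ 1 := by
  rw [Matrix.mul_sub, Matrix.trace_sub, Complex.sub_re]
  obtain ⟨l1, u1⟩ := aux_tr01 hA hB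
  obtain ⟨l2, u2⟩ := aux_tr01 hA hC
  constructor <;> linarith

/-- rank-one density fixed by an idempotent -/
lemma aux_exists_density (Q : Matrix (Fin d) (Fin d) ℂ) (hQ2 : Q * Q = Q) (hQ0 : Q ≠ 0) :
    ∃ ρ : Matrix (Fin d) (Fin d) ℂ, IsDensity ρ ∧ Q * ρ = ρ := by
  obtain ⟨u, hu⟩ : ∃ u, Q *ᵥ u ≠ 0 := by
    by_contra h
    push_neg at h
    apply hQ0
    ext i j
    have := congrFun (h (Pi.single j 1)) i
    simpa [Matrix.mulVec_single] using this
  set w := Q *ᵥ u with hw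
  have hQw : Q *ᵥ w = w := by rw [hw, Matrix.mulVec_mulVec, hQ2]
  set N : ℝ := ∑ i, Complex.normSq (w i) with hN
  have hNpos : 0 < N := by
    obtain ⟨i, hi⟩ : ∃ i, w i ≠ 0 := by
      by_contra h; push_neg at h; exact hu (funext h)
    exact Finset.sum_pos' (fun j _ => Complex.normSq_nonneg _)
      ⟨i, Finset.mem_univ i, Complex.normSq_pos.mpr hi⟩
  have hpsd : (Matrix.vecMulVec w (star w)).PosSemidef := by
    have h : Matrix.vecMulVec w (star w)
        = (Matrix.replicateRow (Fin 1) (star w))ᴴ * Matrix.replicateRow (Fin 1) (star w) := by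
      rw [Matrix.conjTranspose_replicateRow, star_star, Matrix.vecMulVec_eq (Fin 1)]; rfl
    rw [h]
    exact Matrix.posSemidef_conjTranspose_mul_self _
  have htr : (Matrix.vecMulVec w (star w)).trace = ((N : ℝ) : ℂ) := by
    rw [hN]
    simp only [Matrix.trace, Matrix.diag, Matrix.vecMulVec_apply, Pi.star_apply]
    push_cast
    congr 1; ext i
    rw [← Complex.mul_conj]; rfl
  refine ⟨((N⁻¹ : ℝ) : ℂ) • Matrix.vecMulVec w (star w),
    ⟨aux_smulPSD hpsd (inv_nonneg.mpr hNpos.le), ?_⟩, ?_⟩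
  · rw [Matrix.trace_smul, htr, smul_eq_mul, ← Complex.ofReal_mul,
      inv_mul_cancel₀ (ne_of_gt hNpos), Complex.ofReal_one]
  · rw [Matrix.mul_smul]
    congr 1
    ext i j
    simp only [Matrix.mul_apply, Matrix.vecMulVec_apply, Pi.star_apply]
    simp_rw [← mul_assoc]
    rw [← Finset.sum_mul]
    congr 1
    exact congrFun hQw i

noncomputable def gval (Ω : Matrix (Fin d) (Fin d) ℂ)
    (p : Matrix (Fin d) (Fin d) ℂ × Matrix (Fin d) (Fin d) ℂ) : ℝ :=
  (Ω * (p.1 - p.2)).trace.re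

def Kset (P : Matrix (Fin d) (Fin d) ℂ) (e : ℝ) :
    Set (Matrix (Fin d) (Fin d) ℂ × Matrix (Fin d) (Fin d) ℂ) :=
  {p | IsDensity p.1 ∧ P * p.1 = p.1 ∧ IsDensity p.2 ∧ (p.2 * P).trace.re ≤ 1 - e}

/-- Proposition 4: the ε-visibility γ_{V,M}(ε) is monotonically
non-decreasing on (0,1]. -/
theorem gamma_monotone (Mset : Set (Matrix (Fin d) (Fin d) ℂ)) (hM : IsMClass Mset)
    (P : Matrix (Fin d) (Fin d) ℂ) (hP : P.IsHermitian) (hP2 : P * P = P)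
    (hP0 : P ≠ 0) (hP1 : P ≠ 1) (ε ε' : ℝ) (h1 : 0 < ε) (h2 : ε ≤ ε') (h3 : ε' ≤ 1) :
    gamma Mset P ε ≤ gamma Mset P ε' := by
  have hε'pos : 0 < ε' := lt_of_lt_of_le h1 h2
  set c : ℝ := ε / ε' with hc
  have hcpos : 0 < c := div_pos h1 hε'pos
  -- projector facts
  have hPpsd : P.PosSemidef := by
    have h : P = Pᴴ * P := by rw [hP.eq, hP2]
    rw [h]; exact Matrix.posSemidef_conjTranspose_mul_self P
  have hQherm : (1 - P).IsHermitian := by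
    unfold Matrix.IsHermitian
    rw [Matrix.conjTranspose_sub, hP.eq, Matrix.conjTranspose_one]
  have hQ2 : (1 - P) * (1 - P) = 1 - P := by
    rw [Matrix.sub_mul, Matrix.one_mul, Matrix.mul_sub, Matrix.mul_one, hP2]
    abel
  have hQpsd : (1 - P).PosSemidef := by
    have h : (1 - P) = (1 - P)ᴴ * (1 - P) := by rw [hQherm.eq, hQ2]
    rw [h]; exact Matrix.posSemidef_conjTranspose_mul_self _
  have hPPOVM : IsPOVMElem P := ⟨hPpsd, hQpsd⟩
  obtain ⟨ρ₀, hρ₀, hPρ₀⟩ := aux_exists_density P hP2 hP0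
  obtain ⟨σ₀, hσ₀, hQσ₀⟩ := aux_exists_density (1 - P) hQ2
    (by intro h; apply hP1; rw [sub_eq_zero] at h; exact h.symm)
  have hPσ₀ : P * σ₀ = 0 := by
    have h := hQσ₀
    rw [Matrix.sub_mul, Matrix.one_mul, sub_eq_self] at h
    exact h
  have hσ₀P : (σ₀ * P).trace.re = 0 := by
    rw [Matrix.trace_mul_comm, hPσ₀, Matrix.trace_zero, Complex.zero_re]
  have hbase : ∀ e : ℝ, e ≤ 1 → (ρ₀, σ₀) ∈ Kset P e := by
    intro e he
    exact ⟨hρ₀, hPρ₀, hσ₀, by rw [hσ₀P]; linarith⟩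
  -- key step
  have key : ∀ Ω ∈ Mset, sInf (gval Ω '' Kset P ε) ≤ c * sInf (gval Ω '' Kset P ε') := by
    intro Ω hΩ
    have hΩp : IsPOVMElem Ω := hM.2.1 Ω hΩ
    have hbddε : BddBelow (gval Ω '' Kset P ε) := by
      refine ⟨-1, ?_⟩
      rintro x ⟨p, hp, rfl⟩
      exact (aux_gbound hΩp hp.1 hp.2.2.1).1
    have hne' : (gval Ω '' Kset P ε').Nonempty := ⟨_, ⟨(ρ₀, σ₀), hbase ε' h3, rfl⟩⟩
    rw [mul_comm, ← div_le_iff₀ hcpos]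
    apply le_csInf hne'
    rintro b ⟨p, hp, rfl⟩
    rw [div_le_iff₀ hcpos]
    obtain ⟨hp1, hPp1, hp2, hp2P⟩ := hp
    set a : ℝ := (ε' - ε) / ε' with ha
    have hab : a + c = 1 := by
      rw [ha, hc, ← add_div, sub_add_cancel, div_self hε'pos.ne']
    have hanneg : 0 ≤ a := div_nonneg (by linarith) hε'pos.le
    set σh := (a : ℂ) • p.1 + (c : ℂ) • p.2 with hσh
    have hσhden : IsDensity σh := by
      refine ⟨(aux_smulPSD hp1.1 hanneg).add (aux_smulPSD hp2.1 hcpos.le), ?_⟩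
      rw [hσh, Matrix.trace_add, Matrix.trace_smul, Matrix.trace_smul, hp1.2, hp2.2]
      simp only [smul_eq_mul, mul_one]
      exact_mod_cast hab
    have hσhP : (σh * P).trace.re ≤ 1 - ε := by
      have h1' : (p.1 * P).trace.re ≤ 1 := by
        have h := (aux_tr01 hPPOVM hp1).2
        rwa [Matrix.trace_mul_comm] at h
      have hexp : (σh * P).trace.re
          = a * (p.1 * P).trace.re + c * (p.2 * P).trace.re := by
        rw [hσh, Matrix.add_mul, Matrix.smul_mul, Matrix.smul_mul, Matrix.trace_add,
          Matrix.trace_smul, Matrix.trace_smul, Complex.add_re]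
        simp [smul_eq_mul, Complex.re_ofReal_mul]
      have hcε : c * ε' = ε := by rw [hc, div_mul_cancel₀ _ hε'pos.ne']
      rw [hexp]
      nlinarith [mul_le_mul_of_nonneg_left h1' hanneg,
        mul_le_mul_of_nonneg_left hp2P hcpos.le]
    have hmem : (p.1, σh) ∈ Kset P ε := ⟨hp1, hPp1, hσhden, hσhP⟩
    have hdiff : p.1 - σh = (c : ℂ) • (p.1 - p.2) := by
      have haeq : (a : ℂ) = 1 - (c : ℂ) := by
        have : a = 1 - c := by linarith
        rw [this]; push_cast; ring
      rw [hσh, haeq, smul_sub]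
      module
    have hval : gval Ω (p.1, σh) = c * gval Ω p := by
      show (Ω * (p.1 - σh)).trace.re = c * (Ω * (p.1 - p.2)).trace.re
      rw [hdiff, Matrix.mul_smul, Matrix.trace_smul, smul_eq_mul, Complex.re_ofReal_mul]
    calc sInf (gval Ω '' Kset P ε) ≤ gval Ω (p.1, σh) := csInf_le hbddε ⟨(p.1, σh), hmem, rfl⟩
      _ = gval Ω p * c := by rw [hval, mul_comm]
  -- assembly
  have hub' : ∀ x ∈ (fun Ω => sInf (gval Ω '' Kset P ε')) '' Mset, x ≤ 1 := by
    rintro x ⟨Ω, hΩ, rfl⟩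
    refine csInf_le_of_le ?_ ⟨(ρ₀, σ₀), hbase ε' h3, rfl⟩ ?_
    · refine ⟨-1, ?_⟩
      rintro y ⟨p, hp, rfl⟩
      exact (aux_gbound (hM.2.1 Ω hΩ) hp.1 hp.2.2.1).1
    · exact (aux_gbound (hM.2.1 Ω hΩ) hρ₀ hσ₀).2
  have hbddA : BddAbove ((fun Ω => sInf (gval Ω '' Kset P ε')) '' Mset) := ⟨1, hub'⟩
  have hsup : sSup ((fun Ω => sInf (gval Ω '' Kset P ε)) '' Mset)
      ≤ c * sSup ((fun Ω => sInf (gval Ω '' Kset P ε')) '' Mset) := by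
    apply csSup_le ((Set.nonempty_of_mem hM.1).image _)
    rintro x ⟨Ω, hΩ, rfl⟩
    calc sInf (gval Ω '' Kset P ε) ≤ c * sInf (gval Ω '' Kset P ε') := key Ω hΩ
      _ ≤ c * sSup ((fun Ω => sInf (gval Ω '' Kset P ε')) '' Mset) :=
        mul_le_mul_of_nonneg_left (le_csSup hbddA ⟨Ω, hΩ, rfl⟩) hcpos.le
  have hγ : ∀ e : ℝ, gamma Mset P e
      = (1 / e) * sSup ((fun Ω => sInf (gval Ω '' Kset P e)) '' Mset) := fun e => rfl
  rw [hγ, hγ]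
  calc (1 / ε) * sSup ((fun Ω => sInf (gval Ω '' Kset P ε)) '' Mset)
      ≤ (1 / ε) * (c * sSup ((fun Ω => sInf (gval Ω '' Kset P ε')) '' Mset)) :=
        mul_le_mul_of_nonneg_left hsup (by positivity)
    _ = (1 / ε') * sSup ((fun Ω => sInf (gval Ω '' Kset P ε')) '' Mset) := by
        rw [hc]; field_simp


end QSVQDH
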